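/- Let (Ω, 𝔄, P) be a probability space and M : Ω → M_n(ℂ) a P-integrable matrix-valued function with nonnegative Hermitian (positive semidefinite) values. Then ln det(∫_Ω M dP) ≥ ∫_Ω ln det M dP. -/

import Mathlib

open MeasureTheory
open scoped ComplexOrder

open Matrix

lemma aux_pd {m : Type*} [Fintype m] [DecidableEq m] {A : Matrix m m ℂ}
    (hA : A.PosSemidef) (h : A.det ≠ 0) : A.PosDef := by
  refine .of_dotProduct_mulVec_pos hA.1 fun x hx => ?_
  refine (hA.dotProduct_mulVec_nonneg x).lt_of_ne' fun h0 => hx ?_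
  have hMx := (hA.dotProduct_mulVec_zero_iff x).mp h0
  have hu : IsUnit A := (Matrix.isUnit_iff_isUnit_det A).mpr h.isUnit
  have := Matrix.mulVec_injective_iff_isUnit.mpr hu
  have := this (a₁ := x) (a₂ := 0) (by simpa using hMx)
  simpa using this

lemma aux_trace {m : Type*} [Fintype m] [DecidableEq m] {A : Matrix m m ℂ}
    (hA : A.IsHermitian) : A.trace = ∑ i, (hA.eigenvalues i : ℂ) := by
  nth_rewrite 1 [hA.spectral_theorem]
  rw [Unitary.conjStarAlgAut_apply, Matrix.trace_mul_cycle]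
  rw [Unitary.coe_star_mul_self, Matrix.one_mul, Matrix.trace_diagonal]
  rfl

open scoped MatrixOrder in
lemma aux_core {m : Type*} [Fintype m] [DecidableEq m] {A M : Matrix m m ℂ}
    (hA : A.PosDef) (hM : M.PosDef) :
    Real.log M.det.re ≤ ((A⁻¹ * M).trace).re + Real.log A.det.re - Fintype.card m := by
  set S := CFC.sqrt A with hSdef
  have hS : S.PosSemidef := (CFC.sqrt_nonneg A).posSemidef
  have hSS : S * S = A := CFC.sqrt_mul_sqrt_self A hA.posSemidef.nonneg
  have hdetA : 0 < A.det := hA.det_pos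
  have hdetAre : 0 < A.det.re := (Complex.lt_def.mp hdetA).1
  have hdetAim : A.det.im = 0 := ((Complex.lt_def.mp hdetA).2).symm
  have hdetSS : S.det * S.det = A.det := by rw [← Matrix.det_mul, hSS]
  have hdetS : S.det ≠ 0 := by
    intro h; rw [h, mul_zero] at hdetSS; exact hdetA.ne' hdetSS.symm
  have hSpd : S.PosDef := aux_pd hS hdetS
  have hSinvH : (S⁻¹)ᴴ = S⁻¹ := by rw [Matrix.conjTranspose_nonsing_inv, hS.1.eq]
  have hN : (S⁻¹ * M * S⁻¹).PosSemidef := by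
    have := hM.posSemidef.conjTranspose_mul_mul_same (B := S⁻¹)
    rwa [hSinvH] at this
  have hdetSinv : (S⁻¹).det = S.det⁻¹ := by
    rw [Matrix.det_nonsing_inv, Ring.inverse_eq_inv']
  have hdetN : (S⁻¹ * M * S⁻¹).det = M.det / A.det := by
    rw [Matrix.det_mul, Matrix.det_mul, hdetSinv, ← hdetSS]
    field_simp
  have hdetM : 0 < M.det := hM.det_pos
  have hdetMre : 0 < M.det.re := (Complex.lt_def.mp hdetM).1
  have hNpd : (S⁻¹ * M * S⁻¹).PosDef := by
    refine aux_pd hN ?_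
    rw [hdetN]
    exact div_ne_zero hdetM.ne' hdetA.ne'
  set N := S⁻¹ * M * S⁻¹ with hNdef
  set μ := hN.1.eigenvalues with hμ
  have hμpos : ∀ i, 0 < μ i := hNpd.eigenvalues_pos
  have hdetNe : N.det = ((∏ i, μ i : ℝ) : ℂ) := by
    rw [hN.1.det_eq_prod_eigenvalues]; push_cast; rfl
  have htraceN : N.trace = ((∑ i, μ i : ℝ) : ℂ) := by
    rw [aux_trace hN.1]; push_cast; rfl
  -- N.trace = (A⁻¹ * M).trace
  have hAinv : A⁻¹ = S⁻¹ * S⁻¹ := by rw [← hSS, Matrix.mul_inv_rev]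
  have htr : N.trace = ((A⁻¹ * M).trace) := by
    rw [hNdef, Matrix.trace_mul_cycle, hAinv, Matrix.mul_assoc]
  -- M.det = A.det * N.det
  have hMdet : M.det = A.det * N.det := by
    rw [hdetN]; field_simp
  have hMre : M.det.re = A.det.re * N.det.re := by
    rw [hMdet, Complex.mul_re, hdetAim, zero_mul, sub_zero]
  have hNre : N.det.re = ∏ i, μ i := by rw [hdetNe, Complex.ofReal_re]
  have hNrepos : 0 < N.det.re := by
    rw [hNre]; exact Finset.prod_pos fun i _ => hμpos i
  have hlog : Real.log M.det.re = Real.log A.det.re + Real.log N.det.re := by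
    rw [hMre, Real.log_mul hdetAre.ne' hNrepos.ne']
  rw [hlog, ← htr, htraceN]
  have : Real.log N.det.re ≤ (∑ i, μ i) - Fintype.card m := by
    rw [hNre, Real.log_prod fun i _ => (hμpos i).ne']
    have : ∀ i ∈ Finset.univ, Real.log (μ i) ≤ μ i - 1 :=
      fun i _ => Real.log_le_sub_one_of_pos (hμpos i)
    calc ∑ i, Real.log (μ i) ≤ ∑ i, (μ i - 1) := Finset.sum_le_sum this
      _ = (∑ i, μ i) - Fintype.card m := by rw [Finset.sum_sub_distrib]; simp
  simp only [Complex.ofReal_re]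
  linarith

lemma aux_quad {n : ℕ} {Ω : Type*} [MeasurableSpace Ω] (P : Measure Ω) [IsProbabilityMeasure P]
    (M : Ω → Matrix (Fin n) (Fin n) ℂ)
    (hint : ∀ i j, Integrable (fun ω => M ω i j) P) (x : Fin n → ℂ) :
    star x ⬝ᵥ (Matrix.of fun i j => ∫ ω, M ω i j ∂P) *ᵥ x
      = ∫ ω, star x ⬝ᵥ (M ω) *ᵥ x ∂P := by
  have h1 : ∀ ω, star x ⬝ᵥ (M ω) *ᵥ x = ∑ i, ∑ j, star x i * (M ω i j * x j) := by
    intro ω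
    simp [dotProduct, Matrix.mulVec, Finset.mul_sum]
  simp_rw [h1]
  rw [integral_finset_sum _ (fun i _ =>
    integrable_finset_sum _ fun j _ => (((hint i j).mul_const _).const_mul _))]
  have h2 : ∀ i, (∫ ω, ∑ j, star x i * (M ω i j * x j) ∂P)
      = ∑ j, star x i * ((∫ ω, M ω i j ∂P) * x j) := by
    intro i
    rw [integral_finset_sum _ (fun j _ => (((hint i j).mul_const _).const_mul _))]
    refine Finset.sum_congr rfl fun j _ => ?_
    rw [integral_const_mul, integral_mul_const]
  simp_rw [h2]
  simp [dotProduct, Matrix.mulVec, Finset.mul_sum]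

lemma aux_tr_expand {n : ℕ} (B C : Matrix (Fin n) (Fin n) ℂ) :
    (B * C).trace = ∑ i, ∑ j, B i j * C j i := by
  simp [Matrix.trace, Matrix.diag, Matrix.mul_apply]

lemma aux_tr_int {n : ℕ} {Ω : Type*} [MeasurableSpace Ω] (P : Measure Ω) [IsProbabilityMeasure P]
    (M : Ω → Matrix (Fin n) (Fin n) ℂ)
    (hint : ∀ i j, Integrable (fun ω => M ω i j) P) (B : Matrix (Fin n) (Fin n) ℂ) :
    Integrable (fun ω => (B * M ω).trace) P ∧
    ∫ ω, (B * M ω).trace ∂P = (B * Matrix.of fun i j => ∫ ω, M ω i j ∂P).trace := by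
  have hI : ∀ i j : Fin n, Integrable (fun ω => B i j * M ω j i) P :=
    fun i j => (hint j i).const_mul _
  constructor
  · simp_rw [aux_tr_expand]
    exact integrable_finset_sum _ fun i _ => integrable_finset_sum _ fun j _ => hI i j
  · simp_rw [aux_tr_expand]
    rw [integral_finset_sum _ (fun i _ => integrable_finset_sum _ fun j _ => hI i j)]
    refine Finset.sum_congr rfl fun i _ => ?_
    rw [integral_finset_sum _ (fun j _ => hI i j)]
    exact Finset.sum_congr rfl fun j _ => integral_const_mul _ _

lemma aux_quad_int {n : ℕ} {Ω : Type*} [MeasurableSpace Ω] (P : Measure Ω) [IsProbabilityMeasure P]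
    (M : Ω → Matrix (Fin n) (Fin n) ℂ)
    (hint : ∀ i j, Integrable (fun ω => M ω i j) P) (x : Fin n → ℂ) :
    Integrable (fun ω => star x ⬝ᵥ (M ω) *ᵥ x) P := by
  have h1 : ∀ ω, star x ⬝ᵥ (M ω) *ᵥ x = ∑ i, ∑ j, star x i * (M ω i j * x j) := by
    intro ω
    simp [dotProduct, Matrix.mulVec, Finset.mul_sum]
  simp_rw [h1]
  exact integrable_finset_sum _ fun i _ =>
    integrable_finset_sum _ fun j _ => (((hint i j).mul_const _).const_mul _)

/-- **Generalized Minkowski inequality.** Let `(Ω, 𝔄, P)` be a probability space and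
`M : Ω → Mₙ(ℂ)` a `P`-integrable matrix-valued function with positive semidefinite values.
Then `ln det (∫ M dP) ≥ ∫ ln det M dP`. Since `det M ≥ 0` may vanish, `ln det M` takes
values in `[−∞, ∞)`; the inequality is expressed by saying that every integrable real
minorant `g` of `ln det M` (i.e. `exp g ≤ det M` a.e.) satisfies
`∫ g dP ≤ ln det (∫ M dP)`. -/
theorem generalized_minkowski_det (n : ℕ) {Ω : Type*} [MeasurableSpace Ω]
    (P : Measure Ω) [IsProbabilityMeasure P]
    (M : Ω → Matrix (Fin n) (Fin n) ℂ)
    (hint : ∀ i j, Integrable (fun ω => M ω i j) P)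
    (hpsd : ∀ ω, (M ω).PosSemidef) :
    ∀ g : Ω → ℝ, Integrable g P → (∀ᵐ ω ∂P, Real.exp (g ω) ≤ ((M ω).det).re) →
      ∫ ω, g ω ∂P ≤ Real.log (((Matrix.of fun i j => ∫ ω, M ω i j ∂P).det).re) := by
  intro g hg hbound
  set A : Matrix (Fin n) (Fin n) ℂ := Matrix.of fun i j => ∫ ω, M ω i j ∂P with hAdef
  -- a.e., M ω is positive definite and g ω ≤ log det (M ω)
  have hae : ∀ᵐ ω ∂P, (M ω).PosDef ∧ g ω ≤ Real.log ((M ω).det.re) := by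
    filter_upwards [hbound] with ω hω
    have hre : 0 < ((M ω).det).re := lt_of_lt_of_le (Real.exp_pos _) hω
    have hdet : (M ω).det ≠ 0 := fun h => by simp [h] at hre
    exact ⟨aux_pd (hpsd ω) hdet, (Real.le_log_iff_exp_le hre).mpr hω⟩
  -- A is positive definite
  have hAherm : A.IsHermitian := by
    ext i j
    simp only [Matrix.conjTranspose_apply, Matrix.of_apply, hAdef]
    rw [show (star (∫ (ω : Ω), M ω j i ∂P) : ℂ) = (starRingEnd ℂ) (∫ (ω : Ω), M ω j i ∂P)
        from rfl, ← integral_conj]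
    congr 1
    ext ω
    have := congrFun (congrFun (hpsd ω).1 i) j
    simpa [Matrix.conjTranspose_apply] using this
  have hApd : A.PosDef := by
    refine .of_dotProduct_mulVec_pos hAherm fun x hx => ?_
    rw [hAdef, aux_quad P M hint x]
    set f := fun ω => star x ⬝ᵥ (M ω) *ᵥ x with hfdef
    have hfint : Integrable f P := aux_quad_int P M hint x
    have hfnn : ∀ ω, 0 ≤ f ω := fun ω => (hpsd ω).dotProduct_mulVec_nonneg x
    have him : ∀ ω, (f ω).im = 0 := fun ω => ((Complex.le_def.mp (hfnn ω)).2).symm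
    have hrenn : ∀ ω, 0 ≤ (f ω).re := fun ω => (Complex.le_def.mp (hfnn ω)).1
    have hrepos : ∀ᵐ ω ∂P, 0 < (f ω).re := by
      filter_upwards [hae] with ω hω
      exact (Complex.lt_def.mp ((hω.1).dotProduct_mulVec_pos hx)).1
    have hrint : Integrable (fun ω => (f ω).re) P := by simpa using hfint.re
    have hintim : (∫ ω, f ω ∂P).im = 0 := by
      rw [show (∫ ω, f ω ∂P).im = RCLike.im (∫ ω, f ω ∂P) from rfl, ← integral_im hfint]
      simp [him]
    have hintre : 0 < (∫ ω, f ω ∂P).re := by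
      rw [show (∫ ω, f ω ∂P).re = RCLike.re (∫ ω, f ω ∂P) from rfl, ← integral_re hfint]
      simp only [RCLike.re_to_complex]
      rw [integral_pos_iff_support_of_nonneg_ae (Filter.Eventually.of_forall hrenn) hrint]
      set s : Set Ω := Function.support fun ω => (f ω).re with hsdef
      have hnull : P sᶜ = 0 := by
        refine measure_mono_null ?_ (ae_iff.mp hrepos)
        intro ω hω
        simp only [hsdef, Function.compl_support, Set.mem_setOf_eq] at hω ⊢
        rw [hω]; simp
      have h2 : (1 : ENNReal) ≤ P s := by
        calc (1 : ENNReal) = P Set.univ := measure_univ.symm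
          _ ≤ P (s ∪ sᶜ) := measure_mono (by simp)
          _ ≤ P s + P sᶜ := measure_union_le _ _
          _ = P s := by rw [hnull, add_zero]
      exact zero_lt_one.trans_le h2
    exact Complex.lt_def.mpr ⟨hintre, hintim.symm⟩
  have hdetA : 0 < A.det := hApd.det_pos
  have hdetAre : 0 < A.det.re := (Complex.lt_def.mp hdetA).1
  have hAinvA : A⁻¹ * A = 1 := Matrix.nonsing_inv_mul A hdetA.ne'.isUnit
  obtain ⟨hTint, hTval⟩ := aux_tr_int P M hint A⁻¹
  rw [← hAdef, hAinvA] at hTval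
  have hhint : Integrable (fun ω => ((A⁻¹ * M ω).trace).re) P := by simpa using hTint.re
  have hhval : ∫ ω, ((A⁻¹ * M ω).trace).re ∂P = (n : ℝ) := by
    have := integral_re hTint
    rw [hTval] at this
    simpa [Matrix.trace_one] using this
  have hmono : ∀ᵐ ω ∂P, g ω ≤ ((A⁻¹ * M ω).trace).re + (Real.log A.det.re - n) := by
    filter_upwards [hae] with ω hω
    have hcore := aux_core hApd hω.1
    simp only [Fintype.card_fin] at hcore
    linarith [hω.2]
  have hfin := integral_mono_ae hg (hhint.add (integrable_const _)) hmono
  simp only [Pi.add_apply] at hfin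
  rw [integral_add hhint (integrable_const _), integral_const] at hfin
  simp only [measure_univ, probReal_univ, ENNReal.toReal_one, one_smul, smul_eq_mul] at hfin
  rw [hhval] at hfin
  linarith
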